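/- Let r ≥ 3, r ≤ k ≤ 2r-2, and 0 ≤ j ≤ 2r-k-1. If a graph G is 2K_r-free, then any k-clique and any (k+j)-clique of G share at least 2k-2r+1+j vertices. -/
import Mathlib


/-- Let r ≥ 3, r ≤ k ≤ 2r-2 and 0 ≤ j ≤ 2r-k-1. If G is 2K_r-free, then any
k-clique and any (k+j)-clique of G share at least 2k-2r+1+j vertices. -/
theorem stmt2 {V : Type*} [DecidableEq V] (G : SimpleGraph V) (r k j : ℕ)
    (hr : 3 ≤ r) (hrk : r ≤ k) (hk : k ≤ 2 * r - 2) (hj : j ≤ 2 * r - k - 1)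
    (hfree : ¬ ∃ s t : Finset V, G.IsNClique r s ∧ G.IsNClique r t ∧ Disjoint s t) :
    ∀ s t : Finset V, G.IsNClique k s → G.IsNClique (k + j) t →
      2 * k - 2 * r + 1 + j ≤ (s ∩ t).card := by
  intro s t hs ht
  by_contra hcon
  push_neg at hcon
  apply hfree
  have hcard : (s ∩ t).card + (s \ t).card = s.card := Finset.card_inter_add_card_sdiff s t
  rw [hs.card_eq] at hcard
  by_cases hbig : r ≤ (s \ t).card
  · obtain ⟨A, hA, hAc⟩ := Finset.exists_subset_card_eq hbig
    obtain ⟨B, hB, hBc⟩ := Finset.exists_subset_card_eq (show r ≤ t.card by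
      rw [ht.card_eq]; omega)
    refine ⟨A, B, ⟨hs.isClique.subset (hA.trans (Finset.sdiff_subset)), hAc⟩,
      ⟨ht.isClique.subset hB, hBc⟩, ?_⟩
    exact Finset.disjoint_left.mpr fun x hxA hxB =>
      (Finset.mem_sdiff.mp (hA hxA)).2 (hB hxB)
  · have h1 : r - (s \ t).card ≤ (s ∩ t).card := by omega
    obtain ⟨C, hC, hCc⟩ := Finset.exists_subset_card_eq h1
    have hCt : C ⊆ t := hC.trans Finset.inter_subset_right
    have hdisj : Disjoint (s \ t) C := Finset.disjoint_left.mpr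
      fun x hx hxC => (Finset.mem_sdiff.mp hx).2 (hCt hxC)
    have hAcard : ((s \ t) ∪ C).card = r := by
      rw [Finset.card_union_of_disjoint hdisj, hCc]; omega
    have h2 : r ≤ (t \ C).card := by
      rw [Finset.card_sdiff_of_subset hCt, ht.card_eq, hCc]; omega
    obtain ⟨B, hB, hBc⟩ := Finset.exists_subset_card_eq h2
    refine ⟨(s \ t) ∪ C, B, ⟨hs.isClique.subset ?_, hAcard⟩,
      ⟨ht.isClique.subset (hB.trans Finset.sdiff_subset), hBc⟩, ?_⟩
    · exact Finset.union_subset Finset.sdiff_subset (hC.trans Finset.inter_subset_left)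
    · refine Finset.disjoint_left.mpr fun x hx hxB => ?_
      have hxt : x ∈ t \ C := hB hxB
      rcases Finset.mem_union.mp hx with h | h
      · exact (Finset.mem_sdiff.mp h).2 (Finset.mem_sdiff.mp hxt).1
      · exact (Finset.mem_sdiff.mp hxt).2 h
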